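/- There is no holomorphic mapping A : ℂ → M₂(ℂ) such that exp(A(z)) = [[exp(z), 1], [0, 1]] for all z ∈ ℂ; in other words, the holomorphic matrix T(z) = [[e^z, 1], [0, 1]] has no holomorphic logarithm. -/

import Mathlib

/-- A continuous complex function whose square is identically `1` is constant. -/
lemma aux_const_of_sq_eq_one (f : ℂ → ℂ) (hf : Continuous f)
    (h : ∀ z, f z * f z = 1) : ∀ z, f z = f 0 := by
  have hval : ∀ z, f z = 1 ∨ f z = -1 := by
    intro z
    have h' : (f z - 1) * (f z + 1) = 0 := by linear_combination h z
    rcases mul_eq_zero.mp h' with h' | h'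
    · exact Or.inl (by linear_combination h')
    · exact Or.inr (by linear_combination h')
  have hset : {z : ℂ | f z = f 0} = f ⁻¹' Metric.ball (f 0) 1 := by
    ext z
    simp only [Set.mem_setOf_eq, Set.mem_preimage, Metric.mem_ball]
    constructor
    · intro hz; rw [hz]; simp
    · intro hz
      rcases hval z with h1 | h1 <;> rcases hval 0 with h2 | h2 <;>
        rw [h1, h2] at hz ⊢ <;>
        first
          | rfl
          | (exfalso
             rw [Complex.dist_eq] at hz
             norm_num at hz)
  have hclopen : IsClopen {z : ℂ | f z = f 0} := by
    refine ⟨isClosed_eq hf continuous_const, ?_⟩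
    rw [hset]
    exact Metric.isOpen_ball.preimage hf
  intro z
  rcases isClopen_iff.mp hclopen with hS | hS
  · exact (Set.eq_empty_iff_forall_notMem.mp hS 0 rfl).elim
  · exact (hS ▸ Set.mem_univ z : z ∈ {z | f z = f 0})

/-- The holomorphic matrix `T(z) = [[e^z, 1], [0, 1]]` has no holomorphic logarithm. -/
theorem stmt6 :
    ¬ ∃ A : ℂ → Matrix (Fin 2) (Fin 2) ℂ,
      (∀ i j : Fin 2, Differentiable ℂ fun z => A z i j) ∧
      (∀ z : ℂ, NormedSpace.exp (A z) = !![Complex.exp z, 1; 0, 1]) := by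
  rintro ⟨A, hdiff, hexp⟩
  have hAc : Continuous A := continuous_matrix fun i j => (hdiff i j).continuous
  set B : ℂ → Matrix (Fin 2) (Fin 2) ℂ := fun z => NormedSpace.exp ((2 : ℂ)⁻¹ • A z) with hBdef
  have hexpc : Continuous (NormedSpace.exp : Matrix (Fin 2) (Fin 2) ℂ → _) := by
    letI : SeminormedRing (Matrix (Fin 2) (Fin 2) ℂ) := Matrix.linftyOpSemiNormedRing
    letI : NormedRing (Matrix (Fin 2) (Fin 2) ℂ) := Matrix.linftyOpNormedRing
    letI : NormedAlgebra ℂ (Matrix (Fin 2) (Fin 2) ℂ) := Matrix.linftyOpNormedAlgebra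
    letI : NormedAlgebra ℚ (Matrix (Fin 2) (Fin 2) ℂ) := NormedAlgebra.restrictScalars ℚ ℂ _
    exact NormedSpace.exp_continuous
  have hBc : Continuous B := hexpc.comp (show Continuous fun z => (2 : ℂ)⁻¹ • A z from hAc.const_smul ((2 : ℂ)⁻¹))
  have hentry : ∀ i j : Fin 2, Continuous fun z => B z i j := fun i j =>
    continuous_pi_iff.mp (continuous_pi_iff.mp hBc i) j
  have hBB : ∀ z, B z * B z = !![Complex.exp z, 1; 0, 1] := by
    intro z
    rw [← hexp z, hBdef]
    rw [← Matrix.exp_add_of_commute _ _ (Commute.refl _)]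
    congr 1
    rw [← add_smul]
    norm_num
  have h00 : ∀ z, B z 0 0 * B z 0 0 + B z 0 1 * B z 1 0 = Complex.exp z := by
    intro z
    have := congrArg (fun M => M 0 0) (hBB z)
    simpa [Matrix.mul_apply, Fin.sum_univ_two] using this
  have h01 : ∀ z, B z 0 0 * B z 0 1 + B z 0 1 * B z 1 1 = 1 := by
    intro z
    have := congrArg (fun M => M 0 1) (hBB z)
    simpa [Matrix.mul_apply, Fin.sum_univ_two] using this
  have h10 : ∀ z, B z 1 0 * B z 0 0 + B z 1 1 * B z 1 0 = 0 := by
    intro z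
    have := congrArg (fun M => M 1 0) (hBB z)
    simpa [Matrix.mul_apply, Fin.sum_univ_two] using this
  have h11 : ∀ z, B z 1 0 * B z 0 1 + B z 1 1 * B z 1 1 = 1 := by
    intro z
    have := congrArg (fun M => M 1 1) (hBB z)
    simpa [Matrix.mul_apply, Fin.sum_univ_two] using this
  have hbt : ∀ z, B z 0 1 * (B z 0 0 + B z 1 1) = 1 := by
    intro z; linear_combination h01 z
  have hts : ∀ z, B z 0 0 + B z 1 1 ≠ 0 := by
    intro z h
    have := hbt z
    rw [h, mul_zero] at this
    exact zero_ne_one this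
  have hc : ∀ z, B z 1 0 = 0 := by
    intro z
    have h' : B z 1 0 * (B z 0 0 + B z 1 1) = 0 := by linear_combination h10 z
    exact (mul_eq_zero.mp h').resolve_right (hts z)
  have ha2 : ∀ z, B z 0 0 * B z 0 0 = Complex.exp z := by
    intro z
    have := h00 z
    rw [hc z, mul_zero, add_zero] at this
    exact this
  have he2 : ∀ z, B z 1 1 * B z 1 1 = 1 := by
    intro z
    have := h11 z
    rw [hc z, zero_mul, zero_add] at this
    exact this
  -- the (1,1) entry is a constant `v = ±1`
  have hE0 := aux_const_of_sq_eq_one _ (hentry 1 1) he2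
  -- `g z = a z * exp (-(z/2))` squares to 1, hence is a constant `u = ±1`
  set g : ℂ → ℂ := fun z => B z 0 0 * Complex.exp (-(z / 2)) with hgdef
  have hg2 : ∀ z, g z * g z = 1 := by
    intro z
    simp only [hgdef]
    rw [mul_mul_mul_comm, ha2 z, ← Complex.exp_add, ← Complex.exp_add]
    have : z + (-(z / 2) + -(z / 2)) = 0 := by ring
    rw [this, Complex.exp_zero]
  have hgc : Continuous g :=
    (hentry 0 0).mul (Complex.continuous_exp.comp (by continuity))
  have hg0 := aux_const_of_sq_eq_one _ hgc hg2
  have haz : ∀ z, B z 0 0 = g 0 * Complex.exp (z / 2) := by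
    intro z
    rw [← hg0 z, hgdef]
    simp only
    rw [mul_assoc, ← Complex.exp_add]
    have : -(z / 2) + z / 2 = 0 := by ring
    rw [this, Complex.exp_zero, mul_one]
  have hu : g 0 = 1 ∨ g 0 = -1 := mul_self_eq_one_iff.mp (hg2 0)
  have hv : B 0 1 1 = 1 ∨ B 0 1 1 = -1 := mul_self_eq_one_iff.mp (he2 0)
  rcases hu with hu' | hu' <;> rcases hv with hv' | hv'
  · -- u = 1, v = 1 : take z₀ = 2πi
    refine hts (2 * Real.pi * Complex.I) ?_
    rw [haz, hE0, hu', hv']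
    have h2 : (2 * ↑Real.pi * Complex.I) / 2 = ↑Real.pi * Complex.I := by ring
    rw [h2, Complex.exp_pi_mul_I]
    ring
  · -- u = 1, v = -1 : take z₀ = 0
    refine hts 0 ?_
    rw [haz, hE0, hu', hv']
    norm_num
  · -- u = -1, v = 1 : take z₀ = 0
    refine hts 0 ?_
    rw [haz, hE0, hu', hv']
    norm_num
  · -- u = -1, v = -1 : take z₀ = 2πi
    refine hts (2 * Real.pi * Complex.I) ?_
    rw [haz, hE0, hu', hv']
    have h2 : (2 * ↑Real.pi * Complex.I) / 2 = ↑Real.pi * Complex.I := by ring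
    rw [h2, Complex.exp_pi_mul_I]
    ring
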